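/- arXiv:1302.3783 — 2 statements merged into one kernel-verified Lean document; each statement's English description precedes it below -/
import Mathlib

section
/- For the period-doubling word S (fixed point of 0 ↦ 01, 1 ↦ 00), the Abelian complexity satisfies ρ^{(1)}_S((2·4^m + 1)/3) = m + 2 for every m ≥ 0. -/
/-- Number of occurrences of `x` as a factor of `u`. -/
def occ {α : Type*} [DecidableEq α] (u x : List α) : ℕ :=
  ((List.range (u.length + 1)).filter (fun i => decide (x <+: u.drop i))).length

/-- `k`-Abelian equivalence: same number of occurrences of every word of length at most `k`. -/
def KAbEq {α : Type*} [DecidableEq α] (k : ℕ) (u v : List α) : Prop :=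
  ∀ x : List α, x.length ≤ k → occ u x = occ v x

/-- The factor of the infinite word `w` of length `n` starting at position `i`. -/
def factorAt {α : Type*} (w : ℕ → α) (i n : ℕ) : List α :=
  (List.range n).map (fun j => w (i + j))

/-- `k`-Abelian complexity: the number of `k`-Abelian classes of length-`n` factors of `w`. -/
noncomputable def rho {α : Type*} [DecidableEq α] (k : ℕ) (w : ℕ → α) (n : ℕ) : ℕ :=
  Set.ncard { C : Set (List α) | ∃ i : ℕ,
    C = { v | (∃ j : ℕ, v = factorAt w j n) ∧ KAbEq k v (factorAt w i n) } }

lemma occ_nil {α : Type*} [DecidableEq α] (u : List α) : occ u ([] : List α) = u.length + 1 := by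
  simp [occ]

lemma occ_single {α : Type*} [DecidableEq α] (u : List α) (b : α) :
    occ u [b] = u.count b := by
  induction u with
  | nil => simp [occ, List.range_succ]
  | cons a u ih =>
    rw [occ, List.length_cons, List.range_succ_eq_map]
    rw [List.filter_cons]
    have h0 : ([b] <+: (a :: u).drop 0) ↔ (b = a) := by
      simp [List.cons_prefix_cons]
    have h1 : List.filter (fun i => decide ([b] <+: (a :: u).drop i))
          (((List.range (u.length + 1)).map Nat.succ))
        = ((List.range (u.length + 1)).filter
            (fun i => decide ([b] <+: u.drop i))).map Nat.succ := by
      rw [List.filter_map]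
      rfl
    by_cases hba : b = a
    · subst hba
      rw [if_pos (by simp [List.cons_prefix_cons]), h1, List.length_cons,
        List.length_map, List.count_cons]
      have h2 := ih; simp only [occ] at h2
      simp [h2]
    · rw [if_neg (by simp [List.cons_prefix_cons, hba]), h1, List.length_map, List.count_cons]
      have h2 := ih; simp only [occ] at h2
      simp [h2, Ne.symm hba]

lemma count_tf (u : List Bool) : u.count true + u.count false = u.length := by
  induction u with
  | nil => simp
  | cons a u ih => cases a <;> simp [List.count_cons] <;> omega

lemma kabeq_of_count {u v : List Bool} (hl : u.length = v.length)
    (hc : u.count true = v.count true) : KAbEq 1 u v := by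
  intro x hx
  match x with
  | [] => rw [occ_nil, occ_nil, hl]
  | [b] =>
    rw [occ_single, occ_single]
    cases b
    · have h1 := count_tf u
      have h2 := count_tf v
      omega
    · exact hc
  | (a :: b :: t) => simp at hx

lemma kabeq_count {u v : List Bool} (h : KAbEq 1 u v) : u.count true = v.count true := by
  have := h [true] (by simp)
  rwa [occ_single, occ_single] at this

lemma ncard_range_eq {α β : Type*} (f : ℕ → α) (g : ℕ → β)
    (h : ∀ i j, f i = f j ↔ g i = g j) :
    (Set.range f).ncard = (Set.range g).ncard := by
  classical
  set Ψ : α → β := fun a => g (if h' : ∃ i, f i = a then h'.choose else 0) with hΨ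
  have hcomp : ∀ i, Ψ (f i) = g i := by
    intro i
    have h' : ∃ k, f k = f i := ⟨i, rfl⟩
    simp only [Ψ, dif_pos h']
    exact (h _ _).mp h'.choose_spec
  have himg : Ψ '' Set.range f = Set.range g := by
    rw [← Set.range_comp]
    exact congrArg Set.range (funext hcomp)
  have hinj : Set.InjOn Ψ (Set.range f) := by
    rintro a ⟨i, rfl⟩ a' ⟨i', rfl⟩ hh
    rw [hcomp, hcomp] at hh
    exact (h i i').mpr hh
  rw [← himg, Set.ncard_image_of_injOn hinj]

section Word
variable (S : ℕ → Bool)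

def cnt (j n : ℕ) : ℕ := (factorAt S j n).count true

lemma factorAt_append (j a b : ℕ) :
    factorAt S j (a + b) = factorAt S j a ++ factorAt S (j + a) b := by
  unfold factorAt
  rw [List.range_add, List.map_append, List.map_map]
  congr 1
  apply List.map_congr_left
  intro x _
  simp [Function.comp, add_assoc]

lemma cnt_add (j a b : ℕ) : cnt S j (a + b) = cnt S j a + cnt S (j + a) b := by
  rw [cnt, factorAt_append, List.count_append]; rfl

lemma cnt_zero (j : ℕ) : cnt S j 0 = 0 := by simp [cnt, factorAt]

lemma cnt_one (j : ℕ) : cnt S j 1 = if S j then 1 else 0 := by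
  cases h : S j <;> simp [cnt, factorAt, List.range_succ, h]

variable (hS0 : ∀ n, S (2 * n) = false) (hS1 : ∀ n, S (2 * n + 1) = !S n)
include hS0 hS1

lemma cnt0_double (t : ℕ) : cnt S 0 (2 * t) + cnt S 0 t = t := by
  induction t with
  | zero => simp [cnt_zero]
  | succ t ih =>
    have e2 := cnt_add S 0 (2 * t + 1) 1
    have e2b := cnt_add S 0 (2 * t) 1
    have e3 := cnt_add S 0 t 1
    simp only [Nat.zero_add] at e2 e2b e3
    rw [cnt_one] at e2 e2b e3
    rw [hS0] at e2b
    rw [hS1] at e2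
    have e1 : 2 * (t + 1) = (2 * t + 1) + 1 := by ring
    rw [e1, e2]
    cases h : S t <;> simp [h] at e2 e2b e3 ⊢ <;> omega

lemma cnt0_odd (t : ℕ) : cnt S 0 (2 * t + 1) = cnt S 0 (2 * t) := by
  have h := cnt_add S 0 (2 * t) 1
  simp only [Nat.zero_add] at h
  rw [cnt_one, hS0] at h
  simpa using h

end Word

section Dev
variable (S : ℕ → Bool)

noncomputable def Dv (t : ℕ) : ℤ := 3 * (cnt S 0 t : ℤ) - t

variable (hS0 : ∀ n, S (2 * n) = false) (hS1 : ∀ n, S (2 * n + 1) = !S n)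
include hS0 hS1

lemma Dv_even (t : ℕ) : Dv S (2 * t) = -Dv S t := by
  have h := cnt0_double S hS0 hS1 t
  unfold Dv
  push_cast
  omega

lemma Dv_odd (t : ℕ) : Dv S (2 * t + 1) = -Dv S t - 1 := by
  have h := cnt0_double S hS0 hS1 t
  have h2 := cnt0_odd S hS0 hS1 t
  unfold Dv
  push_cast
  omega

omit hS0 hS1 in
lemma Dv_diff (j n : ℕ) : Dv S (j + n) - Dv S j = 3 * (cnt S j n : ℤ) - n := by
  have h : cnt S 0 (j + n) = cnt S 0 j + cnt S j n := by
    have := cnt_add S 0 j n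
    simpa using this
  unfold Dv
  push_cast
  omega

end Dev

section Tsets
variable (S : ℕ → Bool)

def Tset (n : ℕ) : Set ℤ := {d | ∃ j : ℕ, d = Dv S (j + n) - Dv S j}

variable (hS0 : ∀ n, S (2 * n) = false) (hS1 : ∀ n, S (2 * n + 1) = !S n)
include hS0 hS1

lemma mem_even (p : ℕ) (d : ℤ) : d ∈ Tset S (2 * p) ↔ -d ∈ Tset S p := by
  constructor
  · rintro ⟨j, rfl⟩
    rcases Nat.even_or_odd j with ⟨t, rfl⟩ | ⟨t, rfl⟩
    · refine ⟨t, ?_⟩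
      rw [show t + t + 2 * p = 2 * (t + p) by ring, show t + t = 2 * t by ring,
        Dv_even S hS0 hS1, Dv_even S hS0 hS1]
      ring
    · refine ⟨t, ?_⟩
      rw [show 2 * t + 1 + 2 * p = 2 * (t + p) + 1 by ring,
        Dv_odd S hS0 hS1, Dv_odd S hS0 hS1]
      ring
  · rintro ⟨t, ht⟩
    refine ⟨2 * t, ?_⟩
    rw [show 2 * t + 2 * p = 2 * (t + p) by ring, Dv_even S hS0 hS1, Dv_even S hS0 hS1]
    omega

lemma mem_odd (p : ℕ) (d : ℤ) :
    d ∈ Tset S (2 * p + 1) ↔ (-d - 1) ∈ Tset S p ∨ (1 - d) ∈ Tset S (p + 1) := by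
  constructor
  · rintro ⟨j, rfl⟩
    rcases Nat.even_or_odd j with ⟨t, rfl⟩ | ⟨t, rfl⟩
    · refine Or.inl ⟨t, ?_⟩
      rw [show t + t + (2 * p + 1) = 2 * (t + p) + 1 by ring, show t + t = 2 * t by ring,
        Dv_odd S hS0 hS1, Dv_even S hS0 hS1]
      ring
    · refine Or.inr ⟨t, ?_⟩
      rw [show 2 * t + 1 + (2 * p + 1) = 2 * (t + p + 1) by ring,
        Dv_even S hS0 hS1, Dv_odd S hS0 hS1]
      ring
  · rintro (⟨t, ht⟩ | ⟨t, ht⟩)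
    · refine ⟨2 * t, ?_⟩
      rw [show 2 * t + (2 * p + 1) = 2 * (t + p) + 1 by ring,
        Dv_odd S hS0 hS1, Dv_even S hS0 hS1]
      omega
    · refine ⟨2 * t + 1, ?_⟩
      rw [show 2 * t + 1 + (2 * p + 1) = 2 * (t + p + 1) by ring,
        Dv_even S hS0 hS1, Dv_odd S hS0 hS1, show t + p + 1 = t + (p + 1) by ring]
      omega

omit hS0 hS1 in
lemma Dv_zero : Dv S 0 = 0 := by
  simp [Dv, cnt_zero]

lemma Dv_succ_diff (j : ℕ) : Dv S (j + 1) - Dv S j = -1 ∨ Dv S (j + 1) - Dv S j = 2 := by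
  induction j using Nat.strong_induction_on with
  | _ j ih =>
    rcases Nat.even_or_odd j with ⟨t, rfl⟩ | ⟨t, rfl⟩
    · left
      rw [show t + t + 1 = 2 * t + 1 by ring, show t + t = 2 * t by ring,
        Dv_odd S hS0 hS1, Dv_even S hS0 hS1]
      ring
    · have h := ih t (by omega)
      rw [show 2 * t + 1 + 1 = 2 * (t + 1) by ring, Dv_even S hS0 hS1, Dv_odd S hS0 hS1]
      omega

end Tsets

def qq : ℕ → ℕ
  | 0 => 0
  | m + 1 => 4 * qq m + 1

def PA (m : ℕ) (d : ℤ) : Prop := -(m : ℤ) ≤ d ∧ d ≤ 2 * m ∧ (3 : ℤ) ∣ (d + m)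
def PB (m : ℕ) (d : ℤ) : Prop :=
  -(2 * (m : ℤ) + 1) ≤ d ∧ d ≤ (m : ℤ) + 2 ∧ (3 : ℤ) ∣ (d + 2 * m + 1)

lemma qq_pow (m : ℕ) : 3 * qq m + 1 = 4 ^ m := by
  induction m with
  | zero => simp [qq]
  | succ m ih => rw [qq, pow_succ]; omega

section Main
variable (S : ℕ → Bool) (hS0 : ∀ n, S (2 * n) = false) (hS1 : ∀ n, S (2 * n + 1) = !S n)
include hS0 hS1

lemma main_ind (m : ℕ) :
    (∀ d : ℤ, d ∈ Tset S (qq m) ↔ PA m d) ∧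
    (∀ d : ℤ, d ∈ Tset S (2 * qq m + 1) ↔ PB m d) := by
  induction m with
  | zero =>
    constructor
    · intro d
      constructor
      · rintro ⟨j, rfl⟩
        simp only [qq, Nat.add_zero]
        unfold PA
        push_cast
        omega
      · intro hd
        have hd0 : d = 0 := by unfold PA at hd; push_cast at hd; omega
        exact ⟨0, by simp [qq, hd0]⟩
    · intro d
      have hqq : 2 * qq 0 + 1 = 1 := by simp [qq]
      rw [hqq]
      constructor
      · rintro ⟨j, rfl⟩
        have := Dv_succ_diff S hS0 hS1 j
        unfold PB
        push_cast
        omega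
      · intro hd
        have : d = -1 ∨ d = 2 := by unfold PB at hd; push_cast at hd; omega
        rcases this with rfl | rfl
        · exact ⟨0, by rw [show (0 : ℕ) + 1 = 2 * 0 + 1 by ring, Dv_odd S hS0 hS1,
            Dv_zero S]; ring⟩
        · refine ⟨1, ?_⟩
          rw [show (1 : ℕ) + 1 = 2 * 1 by ring, Dv_even S hS0 hS1,
            show (1 : ℕ) = 2 * 0 + 1 by ring, Dv_odd S hS0 hS1, Dv_zero S]
          ring
  | succ m ih =>
    obtain ⟨hA, hB⟩ := ih
    have eA : qq (m + 1) = 2 * (2 * qq m) + 1 := by rw [qq]; ring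
    have hA' : ∀ d : ℤ, d ∈ Tset S (qq (m + 1)) ↔ PA (m + 1) d := by
      intro d
      rw [eA, mem_odd S hS0 hS1, mem_even S hS0 hS1, hA, hB]
      unfold PA PB
      push_cast
      omega
    refine ⟨hA', ?_⟩
    intro d
    have eB : 2 * qq (m + 1) + 1 = 2 * (qq (m + 1)) + 1 := rfl
    have eC : qq (m + 1) + 1 = 2 * (2 * qq m + 1) := by rw [qq]; ring
    rw [eB, mem_odd S hS0 hS1, hA', eC, mem_even S hS0 hS1, hB]
    unfold PA PB
    push_cast
    omega

end Main

lemma card_PB (m : ℕ) : {d : ℤ | PB m d}.ncard = m + 2 := by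
  have hset : {d : ℤ | PB m d}
      = ↑((Finset.range (m + 2)).image (fun k : ℕ => 3 * (k : ℤ) - (2 * m + 1))) := by
    ext d
    simp only [Set.mem_setOf_eq, Finset.coe_image, Set.mem_image, Finset.mem_coe,
      Finset.mem_range]
    constructor
    · rintro ⟨h1, h2, c, hc⟩
      have hc0 : 0 ≤ c := by omega
      obtain ⟨k, rfl⟩ := Int.eq_ofNat_of_zero_le hc0
      exact ⟨k, by push_cast at hc ⊢; omega, by push_cast at hc ⊢; omega⟩
    · rintro ⟨k, hk, rfl⟩
      refine ⟨by push_cast; omega, by push_cast; omega, ⟨(k : ℤ), by push_cast; ring⟩⟩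
  rw [hset, Set.ncard_coe_finset, Finset.card_image_of_injective _ (fun a b h => by omega),
    Finset.card_range]


lemma rho_eq (S : ℕ → Bool) (n : ℕ) : rho 1 S n = (Tset S n).ncard := by
  classical
  set cls : ℕ → Set (List Bool) := fun i =>
    {v | (∃ j : ℕ, v = factorAt S j n) ∧ KAbEq 1 v (factorAt S i n)} with hcls
  set g : ℕ → ℤ := fun i => 3 * ((cnt S i n : ℤ)) - n with hg
  have hlen : ∀ i, (factorAt S i n).length = n := by intro i; simp [factorAt]
  have key : ∀ i i', cls i = cls i' ↔ g i = g i' := by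
    intro i i'
    constructor
    · intro h
      have hmem : factorAt S i n ∈ cls i := ⟨⟨i, rfl⟩, fun x hx => rfl⟩
      rw [h] at hmem
      have hcc := kabeq_count hmem.2
      simp only [hg, cnt, hcc]
    · intro h
      have hcnt : (factorAt S i n).count true = (factorAt S i' n).count true := by
        simp only [hg, cnt] at h
        omega
      have K : KAbEq 1 (factorAt S i n) (factorAt S i' n) :=
        kabeq_of_count (by rw [hlen, hlen]) hcnt
      ext v
      simp only [hcls, Set.mem_setOf_eq]
      constructor
      · rintro ⟨hj, hK⟩; exact ⟨hj, fun x hx => (hK x hx).trans (K x hx)⟩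
      · rintro ⟨hj, hK⟩; exact ⟨hj, fun x hx => (hK x hx).trans (K x hx).symm⟩
  have h1 : rho 1 S n = (Set.range cls).ncard := by
    unfold rho
    congr 1
    ext C
    simp only [Set.mem_setOf_eq, Set.mem_range, hcls]
    exact ⟨fun ⟨i, h⟩ => ⟨i, h.symm⟩, fun ⟨i, h⟩ => ⟨i, h.symm⟩⟩
  have h2 : Set.range g = Tset S n := by
    ext d
    simp only [Set.mem_range, Tset, Set.mem_setOf_eq, hg]
    constructor
    · rintro ⟨i, rfl⟩; exact ⟨i, by rw [Dv_diff]⟩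
    · rintro ⟨j, rfl⟩; exact ⟨j, (Dv_diff S j n).symm⟩
  rw [h1, ncard_range_eq cls g key, h2]

theorem stmt8 (S : ℕ → Bool)
    (hS0 : ∀ n, S (2 * n) = false) (hS1 : ∀ n, S (2 * n + 1) = !S n)
    (m : ℕ) :
    rho 1 S ((2 * 4 ^ m + 1) / 3) = m + 2 := by
  have h4 := qq_pow m
  have hq : (2 * 4 ^ m + 1) / 3 = 2 * qq m + 1 := by omega
  rw [hq, rho_eq S (2 * qq m + 1)]
  have hTB : Tset S (2 * qq m + 1) = {d : ℤ | PB m d} :=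
    Set.ext (main_ind S hS0 hS1 m).2
  rw [hTB, card_PB]
end

section
/- Let T be the Thue–Morse word, S the period-doubling word. Then for all n ≥ 2, ρ^{(1)}_S(n−1) ≤ ρ^{(2)}_T(n) ≤ 4·ρ^{(1)}_S(n−1), where ρ^{(2)}_T(n) is the number of 2-Abelian equivalence classes of length-n factors of T. -/
section Lists
variable {α : Type*}

lemma length_factorAt (w : ℕ → α) (j n : ℕ) : (factorAt w j n).length = n := by
  simp [factorAt]

lemma drop_factorAt (w : ℕ → α) (j n i : ℕ) :
    (factorAt w j n).drop i = factorAt w (j + i) (n - i) := by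
  apply List.ext_getElem
  · simp [factorAt]
  · intro k h1 h2
    simp only [List.getElem_drop, factorAt, List.getElem_map, List.getElem_range]
    congr 1
    omega

lemma take_factorAt (w : ℕ → α) (j n i : ℕ) :
    (factorAt w j n).take i = factorAt w j (min i n) := by
  apply List.ext_getElem
  · simp [factorAt]
  · intro k h1 h2
    simp [factorAt, List.getElem_take]

lemma prefix_factorAt (x : List α) (w : ℕ → α) (j m : ℕ) :
    x <+: factorAt w j m ↔ x.length ≤ m ∧ x = factorAt w j x.length := by
  constructor
  · intro h
    have hl : x.length ≤ m := by
      have := h.length_le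
      simpa [length_factorAt] using this
    refine ⟨hl, ?_⟩
    have hx := List.prefix_iff_eq_take.mp h
    conv_lhs => rw [hx]
    rw [take_factorAt, min_eq_left hl]
  · rintro ⟨hl, hx⟩
    rw [hx, List.prefix_iff_eq_take, take_factorAt, length_factorAt, min_eq_left hl]

lemma filter_length_eq_card (m : ℕ) (p : ℕ → Prop) [DecidablePred p] :
    ((List.range m).filter (fun i => decide (p i))).length
      = ((Finset.range m).filter p).card := by
  induction m with
  | zero => rfl
  | succ m ih =>
    rw [List.range_succ, List.filter_append, Finset.range_add_one, Finset.filter_insert]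
    by_cases h : p m
    · rw [if_pos h, Finset.card_insert_of_notMem (by simp)]
      simp [h, ih]
    · rw [if_neg h]
      simp [h, ih]

lemma occ_eq_card [DecidableEq α] (u x : List α) :
    occ u x = ((Finset.range (u.length + 1)).filter (fun i => x <+: u.drop i)).card :=
  filter_length_eq_card _ _

lemma sum_ite_truncate (n k : ℕ) (Q : ℕ → Prop) [DecidablePred Q] :
    (∑ i ∈ Finset.range (n + 1), if i + k ≤ n ∧ Q i then (1:ℕ) else 0)
      = ∑ i ∈ Finset.range (n + 1 - k), (if Q i then (1:ℕ) else 0) := by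
  rw [← Finset.sum_subset (Finset.range_subset_range.mpr (by omega : n + 1 - k ≤ n + 1))]
  · refine Finset.sum_congr rfl fun i hi => ?_
    rw [Finset.mem_range] at hi
    have h : i + k ≤ n := by omega
    simp [h]
  · intro i hi hni
    rw [Finset.mem_range] at hi hni
    have h : ¬ (i + k ≤ n) := by omega
    simp [h]

lemma occ_window [DecidableEq α] (w : ℕ → α) (j n : ℕ) (x : List α) :
    occ (factorAt w j n) x
      = ∑ i ∈ Finset.range (n + 1 - x.length),
          (if x = factorAt w (j + i) x.length then (1:ℕ) else 0) := by
  rw [occ_eq_card, length_factorAt, Finset.card_filter]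
  rw [← sum_ite_truncate n x.length (fun i => x = factorAt w (j + i) x.length)]
  refine Finset.sum_congr rfl fun i hi => ?_
  rw [Finset.mem_range] at hi
  congr 1
  rw [drop_factorAt, prefix_factorAt]
  apply propext
  constructor
  · rintro ⟨h1, h2⟩; exact ⟨by omega, h2⟩
  · rintro ⟨h1, h2⟩; exact ⟨by omega, h2⟩

lemma factorAt_zero (w : ℕ → α) (m : ℕ) : factorAt w m 0 = [] := rfl

lemma factorAt_one (w : ℕ → α) (m : ℕ) : factorAt w m 1 = [w m] := by
  simp [factorAt, List.range_succ]

lemma factorAt_two (w : ℕ → α) (m : ℕ) : factorAt w m 2 = [w m, w (m+1)] := by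
  simp [factorAt, List.range_succ]

lemma occ_nil_s11 [DecidableEq α] (w : ℕ → α) (j n : ℕ) :
    occ (factorAt w j n) [] = n + 1 := by
  rw [occ_window]
  simp [factorAt_zero]

lemma occ_single_s11 [DecidableEq α] (w : ℕ → α) (j n : ℕ) (a : α) :
    occ (factorAt w j n) [a] = ∑ i ∈ Finset.range n, (if w (j + i) = a then (1:ℕ) else 0) := by
  rw [occ_window]
  have hl : ([a]).length = 1 := rfl
  rw [hl, Nat.add_sub_cancel]
  refine Finset.sum_congr rfl fun i _ => ?_
  have key : ([a] = factorAt w (j + i) ([a]).length) ↔ (w (j + i) = a) := by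
    rw [hl, factorAt_one]
    constructor
    · intro h; exact (List.cons.injEq .. ▸ congrArg id h).1.symm ▸ rfl
    · intro h; rw [h]
  rw [hl] at key
  simp [key]

def pcnt (w : ℕ → Bool) (j L : ℕ) (a c : Bool) : ℕ :=
  ∑ i ∈ Finset.range L, if w (j + i) = a ∧ w (j + i + 1) = c then (1:ℕ) else 0

lemma occ_pair (w : ℕ → Bool) (j n : ℕ) (a c : Bool) :
    occ (factorAt w j n) [a, c] = pcnt w j (n - 1) a c := by
  rw [occ_window, pcnt]
  have hl : ([a, c]).length = 2 := rfl
  rw [hl]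
  have h2 : n + 1 - 2 = n - 1 := by omega
  rw [h2]
  refine Finset.sum_congr rfl fun i _ => ?_
  have key : ([a, c] = factorAt w (j + i) 2) ↔ (w (j + i) = a ∧ w (j + i + 1) = c) := by
    rw [factorAt_two]
    simp [eq_comm]
  simp [key]

end Lists

section Counts

lemma pcnt_total (w : ℕ → Bool) (j L : ℕ) :
    pcnt w j L false false + pcnt w j L false true
      + pcnt w j L true false + pcnt w j L true true = L := by
  unfold pcnt
  rw [← Finset.sum_add_distrib, ← Finset.sum_add_distrib, ← Finset.sum_add_distrib]
  rw [Finset.sum_congr rfl (fun i _ => ?_), Finset.sum_const, Finset.card_range, smul_eq_mul, mul_one]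
  cases h1 : w (j + i) <;> cases h2 : w (j + i + 1) <;> simp [h1, h2]

lemma pcnt_snd (w : ℕ → Bool) (j L : ℕ) :
    pcnt w j L false true + pcnt w j L true true
      = ∑ i ∈ Finset.range L, (if w (j + i + 1) = true then (1:ℕ) else 0) := by
  unfold pcnt
  rw [← Finset.sum_add_distrib]
  refine Finset.sum_congr rfl fun i _ => ?_
  cases h1 : w (j + i) <;> cases h2 : w (j + i + 1) <;> simp [h1, h2]

lemma pcnt_fst (w : ℕ → Bool) (j L : ℕ) :
    pcnt w j L true false + pcnt w j L true true
      = ∑ i ∈ Finset.range L, (if w (j + i) = true then (1:ℕ) else 0) := by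
  unfold pcnt
  rw [← Finset.sum_add_distrib]
  refine Finset.sum_congr rfl fun i _ => ?_
  cases h1 : w (j + i) <;> cases h2 : w (j + i + 1) <;> simp [h1, h2]

lemma pcnt_neq (w : ℕ → Bool) (j L : ℕ) :
    pcnt w j L false true + pcnt w j L true false
      = ∑ i ∈ Finset.range L, (if (w (j + i) == w (j + i + 1)) = false then (1:ℕ) else 0) := by
  unfold pcnt
  rw [← Finset.sum_add_distrib]
  refine Finset.sum_congr rfl fun i _ => ?_
  cases h1 : w (j + i) <;> cases h2 : w (j + i + 1) <;> simp [h1, h2]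

lemma pcnt_eqq (w : ℕ → Bool) (j L : ℕ) :
    pcnt w j L false false + pcnt w j L true true
      = ∑ i ∈ Finset.range L, (if (w (j + i) == w (j + i + 1)) = true then (1:ℕ) else 0) := by
  unfold pcnt
  rw [← Finset.sum_add_distrib]
  refine Finset.sum_congr rfl fun i _ => ?_
  cases h1 : w (j + i) <;> cases h2 : w (j + i + 1) <;> simp [h1, h2]

lemma cnt1_split_first (w : ℕ → Bool) (j L : ℕ) :
    (∑ i ∈ Finset.range (L + 1), if w (j + i) = true then (1:ℕ) else 0)
      = (if w j = true then (1:ℕ) else 0)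
        + ∑ i ∈ Finset.range L, (if w (j + i + 1) = true then (1:ℕ) else 0) := by
  rw [Finset.sum_range_succ', add_comm, add_zero]
  rfl

lemma cnt1_split_last (w : ℕ → Bool) (j L : ℕ) :
    (∑ i ∈ Finset.range (L + 1), if w (j + i) = true then (1:ℕ) else 0)
      = (∑ i ∈ Finset.range L, (if w (j + i) = true then (1:ℕ) else 0))
        + (if w (j + L) = true then (1:ℕ) else 0) := by
  rw [Finset.sum_range_succ]

lemma cnt_partition (w : ℕ → Bool) (j n : ℕ) :
    (∑ i ∈ Finset.range n, if w (j + i) = false then (1:ℕ) else 0)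
      + (∑ i ∈ Finset.range n, if w (j + i) = true then (1:ℕ) else 0) = n := by
  rw [← Finset.sum_add_distrib]
  rw [Finset.sum_congr rfl (fun i _ => ?_), Finset.sum_const, Finset.card_range, smul_eq_mul, mul_one]
  cases h1 : w (j + i) <;> simp [h1]

lemma tog_parity (w : ℕ → Bool) (j : ℕ) : ∀ L : ℕ,
    (∑ i ∈ Finset.range L, if (w (j + i) == w (j + i + 1)) = false then (1:ℕ) else 0) % 2
      = (if w j = w (j + L) then 0 else 1)
  | 0 => by simp
  | (L+1) => by
      rw [Finset.sum_range_succ]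
      have ih := tog_parity w j L
      have harg : j + (L + 1) = j + L + 1 := by omega
      rw [harg]
      cases h1 : w j <;> cases h2 : w (j + L) <;> cases h3 : w (j + L + 1) <;>
        rw [h1, h2] at ih <;> simp [h1, h2, h3] at ih ⊢ <;> omega

end Counts

section Bounds

variable (w : ℕ → Bool)

lemma g_even (hw : ∀ k, w (2*k+1) = !w (2*k)) : ∀ k : ℕ, (∑ i ∈ Finset.range (2*k), if w i = true then (1:ℕ) else 0) = k := by
  intro k
  induction k with
  | zero => simp
  | succ k ih =>
    have h1 : 2*(k+1) = (2*k+1)+1 := by omega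
    rw [h1, Finset.sum_range_succ, Finset.sum_range_succ, ih, hw k]
    cases h : w (2*k) <;> simp [h]

lemma g_odd (hw : ∀ k, w (2*k+1) = !w (2*k)) (k : ℕ) :
    (∑ i ∈ Finset.range (2*k+1), if w i = true then (1:ℕ) else 0)
      = k + (if w (2*k) = true then (1:ℕ) else 0) := by
  rw [Finset.sum_range_succ, g_even w hw]

lemma g_add (j n : ℕ) :
    (∑ i ∈ Finset.range (j+n), if w i = true then (1:ℕ) else 0)
      = (∑ i ∈ Finset.range j, if w i = true then (1:ℕ) else 0)
        + (∑ i ∈ Finset.range n, if w (j+i) = true then (1:ℕ) else 0) := by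
  rw [Finset.sum_range_add]

def loB (w : ℕ → Bool) (j n : ℕ) : ℕ :=
  if n % 2 = 1 then n/2 else (if w j = true then n/2 else n/2 - 1)

lemma count_bounds (hw : ∀ k, w (2*k+1) = !w (2*k)) (j n : ℕ) (hn : 1 ≤ n) :
    loB w j n ≤ (∑ i ∈ Finset.range n, if w (j+i) = true then (1:ℕ) else 0)
      ∧ (∑ i ∈ Finset.range n, if w (j+i) = true then (1:ℕ) else 0) ≤ loB w j n + 1 := by
  have key := g_add w j n
  obtain ⟨a, (ha : j = 2*a) | (ha : j = 2*a+1)⟩ :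
      ∃ a, j = 2*a ∨ j = 2*a+1 := ⟨j/2, by omega⟩
  · obtain ⟨b, (hb : n = 2*b) | (hb : n = 2*b+1)⟩ :
        ∃ b, n = 2*b ∨ n = 2*b+1 := ⟨n/2, by omega⟩
    · subst ha hb
      have h1 : 2*a + 2*b = 2*(a+b) := by omega
      rw [h1, g_even w hw, g_even w hw] at key
      unfold loB
      rw [if_neg (by omega), Nat.mul_div_cancel_left _ (by norm_num)]
      cases h : w (2*a) <;> simp [-Finset.sum_boole] <;> omega
    · subst ha hb
      have h1 : 2*a + (2*b+1) = 2*(a+b)+1 := by omega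
      rw [h1, g_odd w hw, g_even w hw] at key
      unfold loB
      rw [if_pos (by omega)]
      have h2 : (2*b+1)/2 = b := by omega
      rw [h2]
      cases h : w (2*(a+b)) <;> rw [h] at key <;> simp [-Finset.sum_boole] at key <;> omega
  · obtain ⟨b, (hb : n = 2*b) | (hb : n = 2*b+1)⟩ :
        ∃ b, n = 2*b ∨ n = 2*b+1 := ⟨n/2, by omega⟩
    · subst ha hb
      have h1 : 2*a+1 + 2*b = 2*(a+b)+1 := by omega
      rw [h1, g_odd w hw, g_odd w hw] at key
      unfold loB
      rw [if_neg (by omega), Nat.mul_div_cancel_left _ (by norm_num)]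
      have hb1 : 1 ≤ b := by omega
      have hja : w (2*a+1) = !w (2*a) := hw a
      cases h : w (2*a) <;> rw [h] at key hja <;> rw [hja] <;>
        cases h2 : w (2*(a+b)) <;> rw [h2] at key <;> simp [-Finset.sum_boole] at key ⊢ <;> omega
    · subst ha hb
      have h1 : 2*a+1 + (2*b+1) = 2*(a+b+1) := by omega
      rw [h1, g_even w hw, g_odd w hw] at key
      unfold loB
      rw [if_pos (by omega)]
      have h2 : (2*b+1)/2 = b := by omega
      rw [h2]
      cases h : w (2*a) <;> rw [h] at key <;> simp [-Finset.sum_boole] at key <;> omega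

end Bounds

section Classes

def cls (k : ℕ) (w : ℕ → Bool) (m : ℕ) (i : ℕ) : Set (List Bool) :=
  { v | (∃ j : ℕ, v = factorAt w j m) ∧ KAbEq k v (factorAt w i m) }

lemma rho_eq_s11 (k : ℕ) (w : ℕ → Bool) (m : ℕ) :
    rho k w m = (Set.range (cls k w m)).ncard := by
  unfold rho
  congr 1
  ext C
  constructor
  · rintro ⟨i, h⟩; exact ⟨i, h.symm⟩
  · rintro ⟨i, h⟩; exact ⟨i, h.symm⟩

lemma kab_refl {k : ℕ} (u : List Bool) : KAbEq k u u := fun _ _ => rfl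

lemma cls_eq_iff (k : ℕ) (w : ℕ → Bool) (m i i' : ℕ) :
    cls k w m i = cls k w m i' ↔ KAbEq k (factorAt w i m) (factorAt w i' m) := by
  constructor
  · intro h
    have hm : factorAt w i m ∈ cls k w m i := ⟨⟨i, rfl⟩, kab_refl _⟩
    rw [h] at hm
    exact hm.2
  · intro h
    ext v
    constructor
    · rintro ⟨hv, he⟩
      exact ⟨hv, fun x hx => (he x hx).trans (h x hx)⟩
    · rintro ⟨hv, he⟩
      exact ⟨hv, fun x hx => (he x hx).trans (h x hx).symm⟩

lemma cls_finite (k : ℕ) (w : ℕ → Bool) (m : ℕ) : (Set.range (cls k w m)).Finite := by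
  have hsub : Set.range (cls k w m)
      ⊆ (fun u : List Bool => { v | (∃ j : ℕ, v = factorAt w j m) ∧ KAbEq k v u })
          '' { l : List Bool | l.length = m } := by
    rintro C ⟨i, rfl⟩
    exact ⟨factorAt w i m, by simp [length_factorAt], rfl⟩
  exact (((List.finite_length_eq Bool m)).image _).subset hsub

lemma fac_le {α β : Type*} (f : ℕ → α) (g : ℕ → β)
    (hfac : ∀ i j, g i = g j → f i = f j) (hfin : (Set.range g).Finite) :
    (Set.range f).ncard ≤ (Set.range g).ncard := by
  classical
  set F : β → α := fun b => if h : ∃ i, g i = b then f h.choose else f 0 with hF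
  have himg : Set.range f = F '' Set.range g := by
    ext a
    constructor
    · rintro ⟨i, rfl⟩
      refine ⟨g i, ⟨i, rfl⟩, ?_⟩
      rw [hF]
      dsimp only
      rw [dif_pos ⟨i, rfl⟩]
      exact hfac _ _ (Exists.choose_spec (⟨i, rfl⟩ : ∃ j, g j = g i))
    · rintro ⟨b, ⟨i, rfl⟩, rfl⟩
      rw [hF]
      dsimp only
      rw [dif_pos ⟨i, rfl⟩]
      exact ⟨_, rfl⟩
  rw [himg]
  exact Set.ncard_image_le hfin

lemma ncard_prod_univ {α β : Type*} [Fintype β] (s : Set α) :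
    (s ×ˢ (Set.univ : Set β)).ncard = s.ncard * Fintype.card β := by
  rw [← Nat.card_coe_set_eq, ← Nat.card_coe_set_eq]
  rw [Nat.card_congr (Equiv.Set.prod s Set.univ)]
  rw [Nat.card_prod]
  congr 1
  rw [Nat.card_congr (Equiv.Set.univ β)]
  exact Nat.card_eq_fintype_card

end Classes

theorem stmt11 (T S : ℕ → Bool)
    (hT0 : T 0 = false) (hTe : ∀ n, T (2 * n) = T n) (hTo : ∀ n, T (2 * n + 1) = !T n)
    (hS0 : ∀ n, S (2 * n) = false) (hS1 : ∀ n, S (2 * n + 1) = !S n)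
    (n : ℕ) (hn : 2 ≤ n) :
    rho 1 S (n - 1) ≤ rho 2 T n ∧ rho 2 T n ≤ 4 * rho 1 S (n - 1) := by
  classical
  obtain ⟨L, rfl⟩ : ∃ L, n = L + 1 := ⟨n - 1, by omega⟩
  have hL : 1 ≤ L := by omega
  have hsub : L + 1 - 1 = L := by omega
  rw [hsub]
  have Talt : ∀ k, T (2*k+1) = !T (2*k) := fun k => by rw [hTo, hTe]
  have ST : ∀ k, S k = (T k == T (k+1)) := by
    intro k
    induction k using Nat.strong_induction_on with
    | _ k ih =>
      obtain ⟨m, (hm : k = 2*m) | (hm : k = 2*m+1)⟩ :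
          ∃ m, k = 2*m ∨ k = 2*m+1 := ⟨k/2, by omega⟩
      · subst hm
        rw [hS0 m, hTo m, hTe m]
        cases T m <;> rfl
      · subst hm
        rw [hS1 m, ih m (by omega), hTo m]
        have h2 : 2*m+1+1 = 2*(m+1) := by omega
        rw [h2, hTe (m+1)]
        cases T m <;> cases T (m+1) <;> rfl
  -- occurrence identities
  have hSocc_false : ∀ r, occ (factorAt S r L) [false]
      = pcnt T r L false true + pcnt T r L true false := by
    intro r
    rw [occ_single_s11, pcnt_neq]
    exact Finset.sum_congr rfl fun i _ => by rw [ST (r+i)]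
  have hSocc_true : ∀ r, occ (factorAt S r L) [true]
      = pcnt T r L false false + pcnt T r L true true := by
    intro r
    rw [occ_single_s11, pcnt_eqq]
    exact Finset.sum_congr rfl fun i _ => by rw [ST (r+i)]
  have hTocc_pair : ∀ r a c, occ (factorAt T r (L+1)) [a, c] = pcnt T r L a c := by
    intro r a c
    rw [occ_pair, Nat.add_sub_cancel]
  -- the key implications
  have L3 : ∀ p q, KAbEq 2 (factorAt T p (L+1)) (factorAt T q (L+1)) →
      KAbEq 1 (factorAt S p L) (factorAt S q L) := by
    intro p q h x hx
    rcases x with _ | ⟨a, _ | ⟨c, t⟩⟩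
    · rw [occ_nil_s11, occ_nil_s11]
    · cases a
      · rw [hSocc_false p, hSocc_false q,
            ← hTocc_pair p false true, ← hTocc_pair q false true,
            ← hTocc_pair p true false, ← hTocc_pair q true false,
            h [false, true] (by norm_num), h [true, false] (by norm_num)]
      · rw [hSocc_true p, hSocc_true q,
            ← hTocc_pair p false false, ← hTocc_pair q false false,
            ← hTocc_pair p true true, ← hTocc_pair q true true,
            h [false, false] (by norm_num), h [true, true] (by norm_num)]
    · simp at hx
  have L4 : ∀ p q, KAbEq 1 (factorAt S p L) (factorAt S q L) → T p = T q →
      (∑ i ∈ Finset.range (L+1), if T (p+i) = true then (1:ℕ) else 0)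
        = (∑ i ∈ Finset.range (L+1), if T (q+i) = true then (1:ℕ) else 0) →
      KAbEq 2 (factorAt T p (L+1)) (factorAt T q (L+1)) := by
    intro p q hS1ab hfirst hc
    have htog : pcnt T p L false true + pcnt T p L true false
        = pcnt T q L false true + pcnt T q L true false := by
      rw [← hSocc_false p, ← hSocc_false q]
      exact hS1ab [false] (by norm_num)
    have hlast : T (p+L) = T (q+L) := by
      have h1 := tog_parity T p L
      have h2 := tog_parity T q L
      rw [← pcnt_neq] at h1 h2
      have hite : (if T p = T (p+L) then (0:ℕ) else 1)
          = (if T q = T (q+L) then (0:ℕ) else 1) := by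
        rw [← h1, ← h2, htog]
      rw [hfirst] at hite
      cases hpl : T (p+L) <;> cases hql : T (q+L) <;> rw [hpl, hql] at hite <;>
        first
        | rfl
        | (exfalso; cases hq : T q <;> rw [hq] at hite <;> simp at hite)
    -- structural equations
    have e1p := pcnt_total T p L
    have e1q := pcnt_total T q L
    have e2p : (if T p = true then (1:ℕ) else 0)
        + (pcnt T p L false true + pcnt T p L true true)
        = ∑ i ∈ Finset.range (L+1), if T (p+i) = true then (1:ℕ) else 0 := by
      rw [cnt1_split_first, pcnt_snd]
    have e2q : (if T q = true then (1:ℕ) else 0)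
        + (pcnt T q L false true + pcnt T q L true true)
        = ∑ i ∈ Finset.range (L+1), if T (q+i) = true then (1:ℕ) else 0 := by
      rw [cnt1_split_first, pcnt_snd]
    have e3p : (pcnt T p L true false + pcnt T p L true true)
        + (if T (p+L) = true then (1:ℕ) else 0)
        = ∑ i ∈ Finset.range (L+1), if T (p+i) = true then (1:ℕ) else 0 := by
      rw [cnt1_split_last, pcnt_fst]
    have e3q : (pcnt T q L true false + pcnt T q L true true)
        + (if T (q+L) = true then (1:ℕ) else 0)
        = ∑ i ∈ Finset.range (L+1), if T (q+i) = true then (1:ℕ) else 0 := by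
      rw [cnt1_split_last, pcnt_fst]
    rw [← hfirst] at e2q
    rw [← hlast] at e3q
    intro x hx
    rcases x with _ | ⟨a, _ | ⟨c, _ | ⟨d, t⟩⟩⟩
    · rw [occ_nil_s11, occ_nil_s11]
    · cases a
      · rw [occ_single_s11, occ_single_s11]
        have f1 := cnt_partition T p (L+1)
        have f2 := cnt_partition T q (L+1)
        omega
      · rw [occ_single_s11, occ_single_s11]
        exact hc
    · rw [hTocc_pair, hTocc_pair]
      cases hTp : T p <;> rw [hTp] at e2p e2q <;>
        cases hTpl : T (p+L) <;> rw [hTpl] at e3p e3q <;>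
        simp only [Bool.false_eq_true, if_true, if_false, ite_true, ite_false] at e2p e2q e3p e3q <;>
        cases a <;> cases c <;> omega
    · simp at hx
  -- the invariant map
  set ι : ℕ → Bool × Bool := fun i =>
    (T i, decide ((∑ k ∈ Finset.range (L+1), if T (i+k) = true then (1:ℕ) else 0)
      = loB T i (L+1) + 1)) with hι
  have hcount : ∀ p q, ι p = ι q → T p = T q ∧
      (∑ i ∈ Finset.range (L+1), if T (p+i) = true then (1:ℕ) else 0)
        = (∑ i ∈ Finset.range (L+1), if T (q+i) = true then (1:ℕ) else 0) := by
    intro p q h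
    have h1 : T p = T q := congrArg Prod.fst h
    refine ⟨h1, ?_⟩
    have h2 := congrArg Prod.snd h
    simp only [hι] at h2
    rw [decide_eq_decide] at h2
    have hbp := count_bounds T Talt p (L+1) (by omega)
    have hbq := count_bounds T Talt q (L+1) (by omega)
    have hlo : loB T p (L+1) = loB T q (L+1) := by
      unfold loB
      rw [h1]
    rw [hlo] at h2 hbp
    by_cases hA : (∑ i ∈ Finset.range (L+1), if T (p+i) = true then (1:ℕ) else 0)
        = loB T q (L+1) + 1
    · have hB := h2.mp hA
      omega
    · have hB : ¬ ((∑ i ∈ Finset.range (L+1), if T (q+i) = true then (1:ℕ) else 0)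
          = loB T q (L+1) + 1) := fun hh => hA (h2.mpr hh)
      omega
  -- conclusion
  constructor
  · rw [rho_eq_s11, rho_eq_s11]
    exact fac_le (cls 1 S L) (cls 2 T (L+1))
      (fun i j h => (cls_eq_iff 1 S L i j).mpr (L3 i j ((cls_eq_iff 2 T (L+1) i j).mp h)))
      (cls_finite 2 T (L+1))
  · rw [rho_eq_s11, rho_eq_s11]
    set ρp : ℕ → Set (List Bool) × (Bool × Bool) := fun i => (cls 1 S L i, ι i) with hρ
    have hsubρ : Set.range ρp ⊆ (Set.range (cls 1 S L)) ×ˢ (Set.univ : Set (Bool × Bool)) := by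
      rintro C ⟨i, rfl⟩
      exact ⟨⟨i, rfl⟩, trivial⟩
    have hfinρ : (Set.range ρp).Finite :=
      Set.Finite.subset ((cls_finite 1 S L).prod Set.finite_univ) hsubρ
    have step1 : (Set.range (cls 2 T (L+1))).ncard ≤ (Set.range ρp).ncard := by
      apply fac_le _ _ _ hfinρ
      intro i j h
      have h1 : cls 1 S L i = cls 1 S L j := congrArg Prod.fst h
      have h2 : ι i = ι j := congrArg Prod.snd h
      obtain ⟨hf, hcnt⟩ := hcount i j h2
      exact (cls_eq_iff 2 T (L+1) i j).mpr
        (L4 i j ((cls_eq_iff 1 S L i j).mp h1) hf hcnt)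
    have step2 : (Set.range ρp).ncard
        ≤ ((Set.range (cls 1 S L)) ×ˢ (Set.univ : Set (Bool × Bool))).ncard :=
      Set.ncard_le_ncard hsubρ ((cls_finite 1 S L).prod Set.finite_univ)
    have step3 := ncard_prod_univ (β := Bool × Bool) (Set.range (cls 1 S L))
    have hcard4 : Fintype.card (Bool × Bool) = 4 := by simp
    rw [hcard4] at step3
    omega
end
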